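/- For any instance of the Budget Optimization problem, among all uniform strategies A with spend(A) ≤ B, there is one maximizing traffic(A) that is a two-bid strategy (i.e., an optimal uniform strategy may always be taken to be supported on at most two bid vectors). -/

import Mathlib

open MeasureTheory

/-!
Budget Optimization instances.  A query landscape for query `q` has `S q + 1`
positions with click-through rates `α q 0 ≥ … ≥ α q (S q) = 0` and competing
bids `b q 0 ≥ … ≥ b q (S q) = 0`.  Keywords are `Fin nK`, queries `Fin nQ`,
and `nbrs q` is the (nonempty) set of keywords matching query `q`.
-/

noncomputable def landPos (n : ℕ) (b : Fin (n + 1) → ℝ) (x : ℝ) : Fin (n + 1) :=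
  if h : (Finset.univ.filter (fun i => b i ≤ x)).Nonempty
  then (Finset.univ.filter (fun i => b i ≤ x)).min' h
  else Fin.last n

noncomputable def landClicks (n : ℕ) (α b : Fin (n + 1) → ℝ) (x : ℝ) : ℝ :=
  α (landPos n b x)

noncomputable def landCost (n : ℕ) (α b : Fin (n + 1) → ℝ) (x : ℝ) : ℝ :=
  α (landPos n b x) * b (landPos n b x)

/-- An instance of the Budget Optimization problem. -/
structure BOInstance where
  nK : ℕ
  nQ : ℕ
  nbrs : Fin nQ → Finset (Fin nK)
  nbrs_nonempty : ∀ q, (nbrs q).Nonempty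
  S : Fin nQ → ℕ
  α : (q : Fin nQ) → Fin (S q + 1) → ℝ
  b : (q : Fin nQ) → Fin (S q + 1) → ℝ
  α_anti : ∀ q, Antitone (α q)
  b_anti : ∀ q, Antitone (b q)
  α_last : ∀ q, α q (Fin.last (S q)) = 0
  b_last : ∀ q, b q (Fin.last (S q)) = 0
  budget : ℝ
  budget_nonneg : 0 ≤ budget

/-- The effective bid on query `q` induced by the keyword-bid vector `v`. -/
noncomputable def effBid (I : BOInstance) (v : Fin I.nK → ℝ) (q : Fin I.nQ) : ℝ :=
  (I.nbrs q).sup' (I.nbrs_nonempty q) v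

noncomputable def spendVec (I : BOInstance) (v : Fin I.nK → ℝ) : ℝ :=
  ∑ q, landCost (I.S q) (I.α q) (I.b q) (effBid I v q)

noncomputable def trafficVec (I : BOInstance) (v : Fin I.nK → ℝ) : ℝ :=
  ∑ q, landClicks (I.S q) (I.α q) (I.b q) (effBid I v q)

/-- Expected spend of a distribution over keyword-bid vectors. -/
noncomputable def spendD (I : BOInstance) (μ : Measure (Fin I.nK → ℝ)) : ℝ :=
  ∫ v, spendVec I v ∂μ

/-- Expected traffic of a distribution over keyword-bid vectors. -/
noncomputable def trafficD (I : BOInstance) (μ : Measure (Fin I.nK → ℝ)) : ℝ :=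
  ∫ v, trafficVec I v ∂μ

/-- A strategy: a probability distribution over nonnegative keyword-bid vectors. -/
def IsStrategy (I : BOInstance) (μ : Measure (Fin I.nK → ℝ)) : Prop :=
  IsProbabilityMeasure μ ∧ ∀ᵐ v ∂μ, ∀ k, 0 ≤ v k

/-- A uniform strategy: supported on constant (uniform) bid vectors. -/
def IsUniform (I : BOInstance) (μ : Measure (Fin I.nK → ℝ)) : Prop :=
  IsStrategy I μ ∧ ∀ᵐ v ∂μ, ∃ x : ℝ, 0 ≤ x ∧ v = fun _ => x

/-- A two-bid strategy: a uniform strategy supported on at most two bid vectors. -/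
def IsTwoBid (I : BOInstance) (μ : Measure (Fin I.nK → ℝ)) : Prop :=
  ∃ x y l : ℝ, 0 ≤ x ∧ 0 ≤ y ∧ 0 ≤ l ∧ l ≤ 1 ∧
    μ = ENNReal.ofReal l • Measure.dirac (fun _ => x) +
        ENNReal.ofReal (1 - l) • Measure.dirac (fun _ => y)

/-- A single-bid strategy: a uniform strategy supported on at most one nonzero
bid vector together possibly with the zero vector. -/
def IsSingleBid (I : BOInstance) (μ : Measure (Fin I.nK → ℝ)) : Prop :=
  ∃ x l : ℝ, 0 ≤ x ∧ 0 ≤ l ∧ l ≤ 1 ∧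
    μ = ENNReal.ofReal l • Measure.dirac (fun _ => x) +
        ENNReal.ofReal (1 - l) • Measure.dirac (fun _ => (0 : ℝ))

namespace BOaux

/-- The exchange lemma: a convex combination with spend at most `B` is dominated
by a two-point combination with spend at most `B`. -/
lemma exchange {Γ : Type*} [DecidableEq Γ] (s t : Γ → ℝ) (B : ℝ) :
    ∀ (n : ℕ) (A : Finset Γ), A.card ≤ n → ∀ w : Γ → ℝ,
      (∀ a ∈ A, 0 ≤ w a) → (∑ a ∈ A, w a) = 1 → (∑ a ∈ A, w a * s a) ≤ B →
      ∃ x ∈ A, ∃ y ∈ A, ∃ l : ℝ, 0 ≤ l ∧ l ≤ 1 ∧ l * s x + (1 - l) * s y ≤ B ∧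
        (∑ a ∈ A, w a * t a) ≤ l * t x + (1 - l) * t y := by
  intro n
  induction n with
  | zero =>
      intro A hA w hw0 hw1 hsp
      exfalso
      rw [Nat.le_zero, Finset.card_eq_zero] at hA
      subst hA
      simp at hw1
  | succ n ihn =>
      intro A hA w hw0 hw1 hsp
      by_cases hcard : A.card ≤ 2
      · by_cases h0 : A.card = 0
        · exfalso
          rw [Finset.card_eq_zero] at h0
          subst h0
          simp at hw1
        by_cases h1 : A.card = 1
        · obtain ⟨a, rfl⟩ := Finset.card_eq_one.mp h1
          have hwa : w a = 1 := by simpa using hw1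
          refine ⟨a, Finset.mem_singleton_self a, a, Finset.mem_singleton_self a, 1,
            zero_le_one, le_refl 1, ?_, ?_⟩
          · have : w a * s a ≤ B := by simpa using hsp
            rw [hwa] at this
            linarith
          · simp [hwa]
        · have h2 : A.card = 2 := by omega
          obtain ⟨a, b, hab, rfl⟩ := Finset.card_eq_two.mp h2
          have hma : a ∈ ({a, b} : Finset Γ) := by simp
          have hmb : b ∈ ({a, b} : Finset Γ) := by simp
          have hsum : w a + w b = 1 := by
            have := hw1
            rw [Finset.sum_pair hab] at this
            exact this
          refine ⟨a, hma, b, hmb, w a, hw0 a hma, by linarith [hw0 b hmb], ?_, ?_⟩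
          · have h1m : 1 - w a = w b := by linarith
            rw [h1m]
            have := hsp
            rw [Finset.sum_pair hab] at this
            exact this
          · have h1m : 1 - w a = w b := by linarith
            rw [h1m, Finset.sum_pair hab]
      · push_neg at hcard
        obtain ⟨a, haA⟩ := Finset.card_pos.mp (by omega : 0 < A.card)
        have h2' : 1 < (A.erase a).card := by
          rw [Finset.card_erase_of_mem haA]; omega
        obtain ⟨b, hbE, c, hcE, hbc⟩ := Finset.one_lt_card.mp h2'
        have hbA := Finset.mem_of_mem_erase hbE
        have hcA := Finset.mem_of_mem_erase hcE
        have hba : b ≠ a := (Finset.mem_erase.mp hbE).1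
        have hca : c ≠ a := (Finset.mem_erase.mp hcE).1
        obtain ⟨da, db, dc, hdsum, hds, hdne, hdt⟩ : ∃ da db dc : ℝ,
            da + db + dc = 0 ∧ da * s a + db * s b + dc * s c = 0 ∧
            ¬(da = 0 ∧ db = 0 ∧ dc = 0) ∧ 0 ≤ da * t a + db * t b + dc * t c := by
          obtain ⟨ea, eb, ec, h1, h2'', h3⟩ : ∃ ea eb ec : ℝ,
              ea + eb + ec = 0 ∧ ea * s a + eb * s b + ec * s c = 0 ∧
              ¬(ea = 0 ∧ eb = 0 ∧ ec = 0) := by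
            by_cases hsab : s a = s b
            · exact ⟨1, -1, 0, by ring, by rw [hsab]; ring, by intro h; exact one_ne_zero h.1⟩
            · refine ⟨s b - s c, s c - s a, s a - s b, by ring, by ring, ?_⟩
              intro h
              exact hsab (sub_eq_zero.mp h.2.2)
          rcases le_or_gt 0 (ea * t a + eb * t b + ec * t c) with h | h
          · exact ⟨ea, eb, ec, h1, h2'', h3, h⟩
          · refine ⟨-ea, -eb, -ec, by linarith, by linarith, ?_, by linarith⟩
            intro hh
            exact h3 ⟨neg_eq_zero.mp hh.1, neg_eq_zero.mp hh.2.1, neg_eq_zero.mp hh.2.2⟩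
        set d : Γ → ℝ := fun z => if z = a then da else if z = b then db else
          if z = c then dc else 0 with hd
        have hda : d a = da := by simp [hd]
        have hdb : d b = db := by simp [hd, hba]
        have hdc : d c = dc := by simp [hd, hca, Ne.symm hbc]
        have hsupp : ∀ z, z ≠ a → z ≠ b → z ≠ c → d z = 0 := by
          intro z h1 h2 h3; simp [hd, h1, h2, h3]
        have habc_sub : ({a, b, c} : Finset Γ) ⊆ A := by
          intro z hz
          simp only [Finset.mem_insert, Finset.mem_singleton] at hz
          rcases hz with rfl | rfl | rfl <;> assumption
        have key : ∀ f : Γ → ℝ, ∑ z ∈ A, d z * f z = da * f a + db * f b + dc * f c := by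
          intro f
          have hz0 : ∀ z ∈ A, z ∉ ({a, b, c} : Finset Γ) → d z * f z = 0 := by
            intro z _ hz
            simp only [Finset.mem_insert, Finset.mem_singleton, not_or] at hz
            rw [hsupp z hz.1 hz.2.1 hz.2.2, zero_mul]
          rw [← Finset.sum_subset habc_sub hz0]
          have hab' : a ∉ ({b, c} : Finset Γ) := by
            simp [Ne.symm hba, Ne.symm hca]
          rw [Finset.sum_insert hab', Finset.sum_pair hbc, hda, hdb, hdc]
          ring
        have hFne : (({a, b, c} : Finset Γ).filter (fun z => d z < 0)).Nonempty := by
          by_contra hemp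
          rw [Finset.not_nonempty_iff_eq_empty, Finset.filter_eq_empty_iff] at hemp
          have h0a : 0 ≤ da := by
            have := hemp (show a ∈ ({a, b, c} : Finset Γ) by simp)
            rw [hda] at this; linarith [not_lt.mp this]
          have h0b : 0 ≤ db := by
            have := hemp (show b ∈ ({a, b, c} : Finset Γ) by simp)
            rw [hdb] at this; linarith [not_lt.mp this]
          have h0c : 0 ≤ dc := by
            have := hemp (show c ∈ ({a, b, c} : Finset Γ) by simp)
            rw [hdc] at this; linarith [not_lt.mp this]
          exact hdne ⟨by linarith, by linarith, by linarith⟩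
        obtain ⟨i0, hi0F, hi0min⟩ := Finset.exists_min_image _ (fun z => w z / (-d z)) hFne
        have hi0abc : i0 ∈ ({a, b, c} : Finset Γ) := (Finset.mem_filter.mp hi0F).1
        have hi0A : i0 ∈ A := habc_sub hi0abc
        have hdi0 : d i0 < 0 := (Finset.mem_filter.mp hi0F).2
        set θ := w i0 / (-d i0) with hθ
        have hθ0 : 0 ≤ θ := div_nonneg (hw0 i0 hi0A) (by linarith)
        have hθle : ∀ z ∈ A, d z < 0 → θ * (-d z) ≤ w z := by
          intro z hzA hdz
          have hzabc : z ∈ ({a, b, c} : Finset Γ) := by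
            by_contra hz
            simp only [Finset.mem_insert, Finset.mem_singleton, not_or] at hz
            rw [hsupp z hz.1 hz.2.1 hz.2.2] at hdz; linarith
          have hzF : z ∈ (({a, b, c} : Finset Γ).filter (fun z => d z < 0)) :=
            Finset.mem_filter.mpr ⟨hzabc, hdz⟩
          have hmin := hi0min z hzF
          calc θ * (-d z) ≤ (w z / (-d z)) * (-d z) :=
                mul_le_mul_of_nonneg_right hmin (by linarith)
            _ = w z := div_mul_cancel₀ _ (by linarith : (0:ℝ) < -d z).ne'
        set w' : Γ → ℝ := fun z => w z + θ * d z with hw'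
        have hw'0 : ∀ z ∈ A, 0 ≤ w' z := by
          intro z hzA
          show 0 ≤ w z + θ * d z
          rcases le_or_gt 0 (d z) with h | h
          · have h2 := mul_nonneg hθ0 h
            have h3 := hw0 z hzA
            linarith
          · have h2 := hθle z hzA h
            have h3 : θ * (-d z) = -(θ * d z) := by ring
            linarith
        have hw'i0 : w' i0 = 0 := by
          have hne : -d i0 ≠ 0 := by
            have h' : (0:ℝ) < -d i0 := by linarith
            exact h'.ne'
          show w i0 + w i0 / -d i0 * d i0 = 0
          field_simp
          rw [div_self (neg_ne_zero.mp hne)]; ring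
        have hsq : ∀ f : Γ → ℝ,
            ∑ z ∈ A, w' z * f z = (∑ z ∈ A, w z * f z) + θ * (da * f a + db * f b + dc * f c) := by
          intro f
          rw [← key f, Finset.mul_sum, ← Finset.sum_add_distrib]
          refine Finset.sum_congr rfl fun z _ => ?_
          show (w z + θ * d z) * f z = w z * f z + θ * (d z * f z)
          ring
        have hEcard : (A.erase i0).card ≤ n := by
          rw [Finset.card_erase_of_mem hi0A]; omega
        have hsum_erase : ∀ f : Γ → ℝ,
            ∑ z ∈ A.erase i0, w' z * f z = ∑ z ∈ A, w' z * f z := by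
          intro f
          have h := Finset.add_sum_erase A (fun z => w' z * f z) hi0A
          simp only [hw'i0, zero_mul, zero_add] at h
          exact h
        have hW1 : ∑ z ∈ A.erase i0, w' z = 1 := by
          have h := hsum_erase (fun _ => (1:ℝ))
          have h2 := hsq (fun _ => (1:ℝ))
          simp only [mul_one] at h h2
          rw [h, h2, hw1, hdsum, mul_zero, add_zero]
        have hWs : ∑ z ∈ A.erase i0, w' z * s z ≤ B := by
          rw [hsum_erase s, hsq s, hds, mul_zero, add_zero]
          exact hsp
        obtain ⟨x, hx, y, hy, l, hl0, hl1, hlB, hlT⟩ :=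
          ihn (A.erase i0) hEcard w' (fun z hz => hw'0 z (Finset.mem_of_mem_erase hz)) hW1 hWs
        refine ⟨x, Finset.mem_of_mem_erase hx, y, Finset.mem_of_mem_erase hy, l,
          hl0, hl1, hlB, ?_⟩
        have hWt : ∑ z ∈ A, w z * t z ≤ ∑ z ∈ A.erase i0, w' z * t z := by
          rw [hsum_erase t, hsq t]
          nlinarith [mul_nonneg hθ0 hdt]
        linarith

end BOaux

namespace BOaux

open MeasureTheory

lemma landPos_antitone (n : ℕ) (b : Fin (n + 1) → ℝ) : Antitone (landPos n b) := by
  intro x y hxy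
  unfold landPos
  by_cases hx : (Finset.univ.filter (fun i => b i ≤ x)).Nonempty
  · have hsub : (Finset.univ.filter (fun i => b i ≤ x)) ⊆
        (Finset.univ.filter (fun i => b i ≤ y)) := by
      intro i hi
      simp only [Finset.mem_filter] at hi ⊢
      exact ⟨hi.1, hi.2.trans hxy⟩
    obtain ⟨i, hi⟩ := id hx
    have hy : (Finset.univ.filter (fun i => b i ≤ y)).Nonempty := ⟨i, hsub hi⟩
    rw [dif_pos hx, dif_pos hy]
    exact Finset.min'_subset hx hsub
  · rw [dif_neg hx]
    exact Fin.le_last _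

lemma landPos_measurable (n : ℕ) (b : Fin (n + 1) → ℝ) : Measurable (landPos n b) := by
  apply measurable_to_countable'
  intro i
  have h : Set.OrdConnected (landPos n b ⁻¹' {i}) := by
    constructor
    intro x hx y hy z hz
    simp only [Set.mem_preimage, Set.mem_singleton_iff] at hx hy ⊢
    refine le_antisymm ?_ ?_
    · rw [← hx]; exact landPos_antitone n b hz.1
    · rw [← hy]; exact landPos_antitone n b hz.2
  exact h.measurableSet

noncomputable def prof (I : BOInstance) (v : Fin I.nK → ℝ) : ∀ q : Fin I.nQ, Fin (I.S q + 1) :=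
  fun q => landPos (I.S q) (I.b q) (effBid I v q)

noncomputable def Sc (I : BOInstance) (γ : ∀ q : Fin I.nQ, Fin (I.S q + 1)) : ℝ :=
  ∑ q, I.α q (γ q) * I.b q (γ q)

noncomputable def Tc (I : BOInstance) (γ : ∀ q : Fin I.nQ, Fin (I.S q + 1)) : ℝ :=
  ∑ q, I.α q (γ q)

lemma spendVec_eq (I : BOInstance) (v : Fin I.nK → ℝ) : spendVec I v = Sc I (prof I v) := rfl

lemma trafficVec_eq (I : BOInstance) (v : Fin I.nK → ℝ) : trafficVec I v = Tc I (prof I v) := rfl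

lemma effBid_measurable (I : BOInstance) (q : Fin I.nQ) :
    Measurable fun v : Fin I.nK → ℝ => effBid I v q := by
  have h : (fun v : Fin I.nK → ℝ => effBid I v q)
      = (I.nbrs q).sup' (I.nbrs_nonempty q) (fun k (v : Fin I.nK → ℝ) => v k) := by
    funext v
    rw [Finset.sup'_apply]
    rfl
  rw [h]
  exact Finset.measurable_sup' _ fun k _ => measurable_pi_apply k

lemma prof_measurable (I : BOInstance) : Measurable (prof I) :=
  measurable_pi_lambda _ fun q => (landPos_measurable _ _).comp (effBid_measurable I q)

lemma spendVec_measurable (I : BOInstance) : Measurable (spendVec I) :=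
  (measurable_of_finite (Sc I)).comp (prof_measurable I)

lemma trafficVec_measurable (I : BOInstance) : Measurable (trafficVec I) :=
  (measurable_of_finite (Tc I)).comp (prof_measurable I)

lemma effBid_const (I : BOInstance) (x : ℝ) (q : Fin I.nQ) :
    effBid I (fun _ => x) q = x :=
  Finset.sup'_const _ x

lemma b_landPos_zero (n : ℕ) (b : Fin (n + 1) → ℝ) (hb : Antitone b)
    (hbl : b (Fin.last n) = 0) : b (landPos n b 0) = 0 := by
  have hmem : Fin.last n ∈ Finset.univ.filter (fun i => b i ≤ (0:ℝ)) := by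
    simp [hbl]
  have hne : (Finset.univ.filter (fun i => b i ≤ (0:ℝ))).Nonempty := ⟨_, hmem⟩
  have h1 : landPos n b 0 ∈ Finset.univ.filter (fun i => b i ≤ (0:ℝ)) := by
    unfold landPos
    rw [dif_pos hne]
    exact Finset.min'_mem _ _
  have h2 : b (landPos n b 0) ≤ 0 := (Finset.mem_filter.mp h1).2
  have h3 : 0 ≤ b (landPos n b 0) := hbl ▸ hb (Fin.le_last _)
  linarith

lemma integral_comp_fintype {X : Type*} [MeasurableSpace X] (μ : Measure X) [IsFiniteMeasure μ]
    {Γ : Type*} [Fintype Γ] [MeasurableSpace Γ] [MeasurableSingletonClass Γ]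
    (Φ : X → Γ) (hΦ : Measurable Φ) (c : Γ → ℝ) :
    ∫ x, c (Φ x) ∂μ = ∑ γ, (μ (Φ ⁻¹' {γ})).toReal * c γ := by
  have h1 : ∀ x, c (Φ x) = ∑ γ, Set.indicator (Φ ⁻¹' {γ}) (fun _ => c γ) x := by
    intro x
    rw [Finset.sum_eq_single (Φ x)]
    · rw [Set.indicator_of_mem]
      simp
    · intro γ _ hne
      apply Set.indicator_of_notMem
      simp only [Set.mem_preimage, Set.mem_singleton_iff]
      exact fun h => hne h.symm
    · intro h
      exact absurd (Finset.mem_univ _) h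
  have h2 : ∫ x, c (Φ x) ∂μ = ∫ x, ∑ γ, Set.indicator (Φ ⁻¹' {γ}) (fun _ => c γ) x ∂μ := by
    exact integral_congr_ae (Filter.Eventually.of_forall h1)
  rw [h2, integral_finset_sum]
  · refine Finset.sum_congr rfl fun γ _ => ?_
    rw [integral_indicator_const _ (hΦ (measurableSet_singleton γ))]
    rw [smul_eq_mul]
    rfl
  · intro γ _
    exact (integrable_const (c γ)).indicator (hΦ (measurableSet_singleton γ))

lemma integrable_dirac {X : Type*} [MeasurableSpace X] [MeasurableSingletonClass X]
    (f : X → ℝ) (hf : Measurable f) (a : X) : Integrable f (Measure.dirac a) := by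
  refine ⟨hf.aestronglyMeasurable, ?_⟩
  simp only [HasFiniteIntegral]
  rw [lintegral_dirac]
  exact ENNReal.coe_lt_top

end BOaux

set_option maxHeartbeats 1000000 in
/-- Among all uniform strategies respecting the budget, there is one maximizing
traffic which is a two-bid strategy. -/
theorem best_uniform_is_two_bid (I : BOInstance) :
    ∃ μ : Measure (Fin I.nK → ℝ),
      IsUniform I μ ∧ IsTwoBid I μ ∧ spendD I μ ≤ I.budget ∧
      ∀ μ' : Measure (Fin I.nK → ℝ),
        IsUniform I μ' → spendD I μ' ≤ I.budget → trafficD I μ' ≤ trafficD I μ := by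
  classical
  -- the finite set of achievable profiles
  set AΓ : Set (∀ q : Fin I.nQ, Fin (I.S q + 1)) :=
    {γ | ∃ x : ℝ, 0 ≤ x ∧ BOaux.prof I (fun _ => x) = γ} with hAΓ
  set A : Finset (∀ q : Fin I.nQ, Fin (I.S q + 1)) := (Set.toFinite AΓ).toFinset with hA
  have hmemA : ∀ γ, γ ∈ A ↔ ∃ x : ℝ, 0 ≤ x ∧ BOaux.prof I (fun _ => x) = γ := by
    intro γ
    rw [hA, Set.Finite.mem_toFinset]
    rfl
  set γ0 := BOaux.prof I (fun _ => (0:ℝ)) with hγ0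
  have hγ0A : γ0 ∈ A := (hmemA γ0).mpr ⟨0, le_refl 0, rfl⟩
  have hScγ0 : BOaux.Sc I γ0 = 0 := by
    apply Finset.sum_eq_zero
    intro q _
    have hb0 : I.b q (γ0 q) = 0 := by
      show I.b q (landPos (I.S q) (I.b q) (effBid I (fun _ => 0) q)) = 0
      rw [BOaux.effBid_const]
      exact BOaux.b_landPos_zero _ _ (I.b_anti q) (I.b_last q)
    rw [hb0, mul_zero]
  -- the finite candidate set of two-bid strategies
  set C : Finset ((∀ q : Fin I.nQ, Fin (I.S q + 1)) × (∀ q : Fin I.nQ, Fin (I.S q + 1)) × ℝ) :=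
    ((A ×ˢ A).biUnion fun p => {(p.1, p.2, (1:ℝ)),
      (p.1, p.2, (I.budget - BOaux.Sc I p.2) / (BOaux.Sc I p.1 - BOaux.Sc I p.2))}).filter
      (fun c => 0 ≤ c.2.2 ∧ c.2.2 ≤ 1 ∧
        c.2.2 * BOaux.Sc I c.1 + (1 - c.2.2) * BOaux.Sc I c.2.1 ≤ I.budget) with hC
  have hcand0 : (γ0, γ0, (1:ℝ)) ∈ C := by
    rw [hC, Finset.mem_filter]
    refine ⟨Finset.mem_biUnion.mpr ⟨(γ0, γ0), Finset.mem_product.mpr ⟨hγ0A, hγ0A⟩, by simp⟩,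
      zero_le_one, le_refl 1, ?_⟩
    simp only [hScγ0]
    simpa using I.budget_nonneg
  obtain ⟨copt, hcoptC, hcoptmax⟩ := Finset.exists_max_image C
    (fun c => c.2.2 * BOaux.Tc I c.1 + (1 - c.2.2) * BOaux.Tc I c.2.1) ⟨_, hcand0⟩
  obtain ⟨hmemb, hl0, hl1, hlB⟩ := Finset.mem_filter.mp hcoptC
  obtain ⟨p, hpA, hpmem⟩ := Finset.mem_biUnion.mp hmemb
  have hp := Finset.mem_product.mp hpA
  have hc12 : copt.1 = p.1 ∧ copt.2.1 = p.2 := by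
    have h' : copt = (p.1, p.2, (1:ℝ)) ∨ copt = (p.1, p.2,
        (I.budget - BOaux.Sc I p.2) / (BOaux.Sc I p.1 - BOaux.Sc I p.2)) := by
      simpa using hpmem
    rcases h' with h | h <;> rw [h] <;> exact ⟨rfl, rfl⟩
  have hc1A : copt.1 ∈ A := hc12.1 ▸ hp.1
  have hc2A : copt.2.1 ∈ A := hc12.2 ▸ hp.2
  obtain ⟨xs, hxs0, hxs⟩ := (hmemA copt.1).mp hc1A
  obtain ⟨ys, hys0, hys⟩ := (hmemA copt.2.1).mp hc2A
  set l := copt.2.2 with hldef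
  set μ : Measure (Fin I.nK → ℝ) :=
    ENNReal.ofReal l • Measure.dirac (fun _ => xs) +
      ENNReal.ofReal (1 - l) • Measure.dirac (fun _ => ys) with hμ
  have hl1' : (0:ℝ) ≤ 1 - l := by linarith
  -- integrals against μ
  have hint : ∀ f : (Fin I.nK → ℝ) → ℝ, Measurable f →
      ∫ v, f v ∂μ = l * f (fun _ => xs) + (1 - l) * f (fun _ => ys) := by
    intro f hf
    rw [hμ, integral_add_measure
        ((BOaux.integrable_dirac f hf _).smul_measure ENNReal.ofReal_ne_top)
        ((BOaux.integrable_dirac f hf _).smul_measure ENNReal.ofReal_ne_top),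
      integral_smul_measure, integral_smul_measure, integral_dirac, integral_dirac,
      ENNReal.toReal_ofReal hl0, ENNReal.toReal_ofReal hl1']
    simp [smul_eq_mul]
  have hprob : IsProbabilityMeasure μ := by
    constructor
    rw [hμ]
    simp only [Measure.add_apply, Measure.smul_apply, smul_eq_mul,
      Measure.dirac_apply_of_mem (Set.mem_univ _), mul_one]
    rw [← ENNReal.ofReal_add hl0 hl1']
    norm_num
  have hae : ∀ P : (Fin I.nK → ℝ) → Prop, P (fun _ => xs) → P (fun _ => ys) →
      (∀ᵐ v ∂μ, P v) := by
    intro P h1 h2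
    rw [hμ, ae_add_measure_iff]
    refine ⟨Measure.ae_smul_measure ?_ _, Measure.ae_smul_measure ?_ _⟩ <;>
      rw [ae_dirac_eq] <;> [exact h1; exact h2]
  refine ⟨μ, ⟨⟨hprob, hae (fun v => ∀ k, 0 ≤ v k) (fun _ => hxs0) (fun _ => hys0)⟩,
      hae _ ⟨xs, hxs0, rfl⟩ ⟨ys, hys0, rfl⟩⟩,
    ⟨xs, ys, l, hxs0, hys0, hl0, hl1, hμ⟩, ?_, ?_⟩
  · -- budget
    rw [spendD, hint _ (BOaux.spendVec_measurable I), BOaux.spendVec_eq, BOaux.spendVec_eq,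
      hxs, hys]
    exact hlB
  · -- optimality
    intro μ' hμ'unif hμ'B
    obtain ⟨⟨hμ'prob, _⟩, hμ'const⟩ := hμ'unif
    haveI := hμ'prob
    set w : (∀ q : Fin I.nQ, Fin (I.S q + 1)) → ℝ :=
      fun γ => (μ' (BOaux.prof I ⁻¹' {γ})).toReal with hw
    have hwnull : ∀ γ, γ ∉ A → μ' (BOaux.prof I ⁻¹' {γ}) = 0 := by
      intro γ hγ
      have hnull : μ' {v | ¬ ∃ x : ℝ, 0 ≤ x ∧ v = fun _ => x} = 0 := ae_iff.mp hμ'const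
      apply measure_mono_null _ hnull
      intro v hv
      simp only [Set.mem_preimage, Set.mem_singleton_iff] at hv
      simp only [Set.mem_setOf_eq]
      rintro ⟨x, hx0, hvx⟩
      rw [hvx] at hv
      exact hγ ((hmemA γ).mpr ⟨x, hx0, hv⟩)
    have hsum_eq : ∀ c : (∀ q : Fin I.nQ, Fin (I.S q + 1)) → ℝ,
        ∫ v, c (BOaux.prof I v) ∂μ' = ∑ γ ∈ A, w γ * c γ := by
      intro c
      rw [BOaux.integral_comp_fintype μ' (BOaux.prof I) (BOaux.prof_measurable I) c]
      refine (Finset.sum_subset (Finset.subset_univ A) fun γ _ hγ => ?_).symm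
      rw [hwnull γ hγ]
      simp
    have hsum1 : ∑ γ ∈ A, w γ = 1 := by
      have h := hsum_eq (fun _ => (1:ℝ))
      rw [integral_const] at h
      simp only [Measure.real, measure_univ, ENNReal.toReal_one, smul_eq_mul, one_mul, mul_one] at h
      exact h.symm
    have hsumS : ∑ γ ∈ A, w γ * BOaux.Sc I γ ≤ I.budget := by
      have h := hsum_eq (BOaux.Sc I)
      rw [← h]
      exact hμ'B
    obtain ⟨gx, hgxA, gy, hgyA, m, hm0, hm1, hmB, hmT⟩ :=
      BOaux.exchange (BOaux.Sc I) (BOaux.Tc I) I.budget A.card A (le_refl _) w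
        (fun γ _ => ENNReal.toReal_nonneg) hsum1 hsumS
    -- domination by the optimal candidate
    have hval : ∀ c ∈ C, c.2.2 * BOaux.Tc I c.1 + (1 - c.2.2) * BOaux.Tc I c.2.1 ≤
        l * BOaux.Tc I copt.1 + (1 - l) * BOaux.Tc I copt.2.1 := hcoptmax
    have main : ∀ g1 ∈ A, ∀ g2 ∈ A, ∀ m' : ℝ, 0 ≤ m' → m' ≤ 1 →
        BOaux.Tc I g2 ≤ BOaux.Tc I g1 →
        m' * BOaux.Sc I g1 + (1 - m') * BOaux.Sc I g2 ≤ I.budget →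
        ∃ c ∈ C, m' * BOaux.Tc I g1 + (1 - m') * BOaux.Tc I g2 ≤
          c.2.2 * BOaux.Tc I c.1 + (1 - c.2.2) * BOaux.Tc I c.2.1 := by
      intro g1 h1 g2 h2 m' hm'0 hm'1 hT hm'B
      by_cases hS1 : BOaux.Sc I g1 ≤ I.budget
      · refine ⟨(g1, g2, 1), ?_, ?_⟩
        · rw [hC, Finset.mem_filter]
          refine ⟨Finset.mem_biUnion.mpr ⟨(g1, g2),
            Finset.mem_product.mpr ⟨h1, h2⟩, by simp⟩, zero_le_one, le_refl 1, ?_⟩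
          simpa using hS1
        · show m' * BOaux.Tc I g1 + (1 - m') * BOaux.Tc I g2 ≤
            1 * BOaux.Tc I g1 + (1 - 1) * BOaux.Tc I g2
          nlinarith [mul_nonneg (sub_nonneg.mpr hm'1) (sub_nonneg.mpr hT)]
      · push_neg at hS1
        have hm'lt1 : m' < 1 := by
          rcases lt_or_eq_of_le hm'1 with h | h
          · exact h
          · exfalso
            rw [h] at hm'B
            simp only [sub_self, zero_mul, add_zero, one_mul] at hm'B
            linarith
        have hS2 : BOaux.Sc I g2 ≤ I.budget := by
          nlinarith [mul_nonneg hm'0 (sub_pos.mpr hS1).le, sub_pos.mpr hm'lt1]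
        have hdpos : 0 < BOaux.Sc I g1 - BOaux.Sc I g2 := by linarith
        set ls := (I.budget - BOaux.Sc I g2) / (BOaux.Sc I g1 - BOaux.Sc I g2) with hls
        have hls0 : 0 ≤ ls := div_nonneg (by linarith) hdpos.le
        have hls1 : ls ≤ 1 := by
          rw [hls, div_le_one hdpos]
          linarith
        have hlsmul : ls * (BOaux.Sc I g1 - BOaux.Sc I g2) =
            I.budget - BOaux.Sc I g2 := div_mul_cancel₀ _ hdpos.ne'
        have hlsB : ls * BOaux.Sc I g1 + (1 - ls) * BOaux.Sc I g2 = I.budget := by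
          linear_combination hlsmul
        have hm'ls : m' ≤ ls := by
          rw [hls, le_div_iff₀ hdpos]
          nlinarith
        refine ⟨(g1, g2, ls), ?_, ?_⟩
        · rw [hC, Finset.mem_filter]
          refine ⟨Finset.mem_biUnion.mpr ⟨(g1, g2),
            Finset.mem_product.mpr ⟨h1, h2⟩, by simp [hls]⟩, hls0, hls1, le_of_eq hlsB⟩
        · show m' * BOaux.Tc I g1 + (1 - m') * BOaux.Tc I g2 ≤
            ls * BOaux.Tc I g1 + (1 - ls) * BOaux.Tc I g2
          nlinarith [mul_nonneg (sub_nonneg.mpr hm'ls) (sub_nonneg.mpr hT)]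
    have hdom : m * BOaux.Tc I gx + (1 - m) * BOaux.Tc I gy ≤
        l * BOaux.Tc I copt.1 + (1 - l) * BOaux.Tc I copt.2.1 := by
      rcases le_total (BOaux.Tc I gy) (BOaux.Tc I gx) with hT | hT
      · obtain ⟨c, hcC, hcv⟩ := main gx hgxA gy hgyA m hm0 hm1 hT hmB
        exact hcv.trans (hval c hcC)
      · have hswap : (1 - m) * BOaux.Sc I gy + (1 - (1 - m)) * BOaux.Sc I gx ≤ I.budget := by
          have : (1 - m) * BOaux.Sc I gy + (1 - (1 - m)) * BOaux.Sc I gx =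
              m * BOaux.Sc I gx + (1 - m) * BOaux.Sc I gy := by ring
          rw [this]
          exact hmB
        obtain ⟨c, hcC, hcv⟩ := main gy hgyA gx hgxA (1 - m) (by linarith) (by linarith) hT hswap
        have heq : (1 - m) * BOaux.Tc I gy + (1 - (1 - m)) * BOaux.Tc I gx =
            m * BOaux.Tc I gx + (1 - m) * BOaux.Tc I gy := by ring
        rw [heq] at hcv
        exact hcv.trans (hval c hcC)
    have htraf : trafficD I μ' = ∑ γ ∈ A, w γ * BOaux.Tc I γ := by
      rw [trafficD]
      have : ∀ v, trafficVec I v = BOaux.Tc I (BOaux.prof I v) := BOaux.trafficVec_eq I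
      simp_rw [this]
      exact hsum_eq (BOaux.Tc I)
    have htrafμ : trafficD I μ = l * BOaux.Tc I copt.1 + (1 - l) * BOaux.Tc I copt.2.1 := by
      rw [trafficD, hint _ (BOaux.trafficVec_measurable I), BOaux.trafficVec_eq,
        BOaux.trafficVec_eq, hxs, hys]
    rw [htraf, htrafμ]
    exact le_trans hmT hdom
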